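/- arXiv:2407.07386 — 2 statements merged into one kernel-verified Lean document; each statement's English description precedes it below -/
import Mathlib

section
/- New clearing price after adding one bid: Let B be a multiset of real bids with |B| ≥ k + 1, let b_k and b_{k+1} denote respectively the k-th and (k+1)-th largest elements of B, and let b be a new bid with b > b_{k+1}. Then the (k+1)-th largest element of the multiset B + {b} equals min b b_k. -/
/-- The `m`-th largest element of a multiset of bids: the `m`-th entry
(1-indexed) of the multiset sorted in decreasing order. -/
noncomputable def kthLargest (B : Multiset ℝ) (m : ℕ) : ℝ :=
  (B.sort (· ≥ ·)).getD (m - 1) 0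

private lemma aux_insert (b : ℝ) :
    ∀ (l : List ℝ) (n : ℕ), l.Pairwise (· ≥ ·) → n + 2 ≤ l.length →
      l.getD (n + 1) 0 < b →
      (l.orderedInsert (· ≥ ·) b).getD (n + 1) 0 = min b (l.getD n 0) := by
  intro l
  induction l with
  | nil => intro n _ h _; simp at h
  | cons x t ih =>
    intro n hs hlen hb
    rw [List.orderedInsert]
    by_cases hbx : b ≥ x
    · rw [if_pos hbx]
      rw [List.getD_cons_succ]
      have hle : (x :: t).getD n 0 ≤ b := by
        rcases n with _ | m
        · simpa using hbx
        · rw [List.getD_cons_succ]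
          have hm : m < t.length := by simp at hlen; omega
          rw [List.getD_eq_getElem _ _ hm]
          have := (List.pairwise_cons.mp hs).1 _ (t.getElem_mem hm)
          linarith
      rw [min_eq_right hle]
    · rw [if_neg hbx]
      push_neg at hbx
      rcases n with _ | m
      · rw [List.getD_cons_succ, List.getD_cons_zero]
        rw [min_eq_left (le_of_lt hbx)]
        -- t is nonempty and b ≥ head of t
        rcases t with _ | ⟨y, t'⟩
        · simp at hlen
        · rw [List.getD_cons_succ, List.getD_cons_zero] at hb
          rw [List.orderedInsert, if_pos (le_of_lt hb)]
          rfl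
      · rw [List.getD_cons_succ, List.getD_cons_succ]
        have := ih m (List.pairwise_cons.mp hs).2 (by simp at hlen ⊢; omega)
          (by rw [List.getD_cons_succ] at hb; exact hb)
        rw [this]

private lemma sort_add_singleton (B : Multiset ℝ) (b : ℝ) :
    (B + {b}).sort (· ≥ ·) = (B.sort (· ≥ ·)).orderedInsert (· ≥ ·) b := by
  refine (fun hp h1 h2 => List.Perm.eq_of_pairwise' (r := (· ≥ ·)) h1 h2 hp) ?_ ?_ ?_
  on_goal 2 => exact Multiset.pairwise_sort _ _
  on_goal 2 => exact (Multiset.pairwise_sort _ _).orderedInsert b _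
  · have h1 : ((B + {b}).sort (· ≥ ·) : Multiset ℝ) = B + {b} := Multiset.sort_eq _ _
    have h2 : (((B.sort (· ≥ ·)).orderedInsert (· ≥ ·) b : List ℝ) : Multiset ℝ)
        = B + {b} := by
      have := (List.perm_orderedInsert (· ≥ ·) b (B.sort (· ≥ ·)))
      rw [Multiset.coe_eq_coe.mpr this]
      rw [← Multiset.cons_coe, Multiset.sort_eq, add_comm, Multiset.singleton_add]
    rw [← Multiset.coe_eq_coe, h1, h2]

/-- New clearing price after adding one bid: if the new bid `b` exceeds the
`(k+1)`-th largest bid of `B`, the `(k+1)`-th largest bid of `B + {b}`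
equals `min b b_k`, where `b_k` is the `k`-th largest bid of `B`. -/
theorem clearing_price_after_adding_bid (k : ℕ) (hk : 1 ≤ k) (B : Multiset ℝ)
    (hcard : k + 1 ≤ Multiset.card B) (b : ℝ)
    (hb : kthLargest B (k + 1) < b) :
    kthLargest (B + {b}) (k + 1) = min b (kthLargest B k) := by
  obtain ⟨n, rfl⟩ : ∃ n, k = n + 1 := ⟨k - 1, by omega⟩
  unfold kthLargest at *
  rw [sort_add_singleton]
  have hlen : n + 2 ≤ (B.sort (· ≥ ·)).length := by
    rw [Multiset.length_sort]; omega
  have := aux_insert b (B.sort (· ≥ ·)) n (Multiset.pairwise_sort _ _) hlen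
    (by simpa using hb)
  simpa using this
end

section
/- Strict part of Proposition 4: Let B be a multiset of real bids with |B| ≥ k + 1, let b_k and b_{k+1} denote respectively the k-th and (k+1)-th largest elements of B, and let b be a speculator's bid. If b > b_{k+1} and b_k > b_{k+1}, then the clearing price of B + {b} for k units is strictly greater than the clearing price of B for k units: the (k+1)-th largest element of B + {b} is strictly greater than b_{k+1}. -/
private lemma sorted_getD_lt_of_countP (L : List ℝ) (hL : L.Pairwise (· ≥ ·)) (k : ℕ)
    (hk : k < L.length) (t : ℝ)
    (h : k + 1 ≤ L.countP (fun x => decide (t < x))) : t < L.getD k 0 := by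
  by_contra hle
  push_neg at hle
  rw [List.getD_eq_getElem L 0 hk] at hle
  have hsplit := (List.take_append_drop k L).symm
  have hcount : L.countP (fun x => decide (t < x)) =
      (L.take k).countP (fun x => decide (t < x)) +
      (L.drop k).countP (fun x => decide (t < x)) := by
    conv_lhs => rw [hsplit]
    rw [List.countP_append]
  have hdrop : (L.drop k).countP (fun x => decide (t < x)) = 0 := by
    rw [List.countP_eq_zero]
    intro x hx
    simp only [decide_eq_true_eq, not_lt]
    obtain ⟨i, hi, rfl⟩ := List.mem_iff_getElem.mp hx
    rw [List.getElem_drop]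
    have hki : k + i < L.length := by
      have := hi; rw [List.length_drop] at this; omega
    have : L[k] ≥ L[k + i] := by
      rcases Nat.eq_zero_or_pos i with h0 | h0
      · subst h0; simp
      · exact hL.rel_get_of_lt (a := ⟨k, hk⟩) (b := ⟨k + i, hki⟩) (by simp; omega)
    linarith
  have htake : (L.take k).countP (fun x => decide (t < x)) ≤ k :=
    le_trans List.countP_le_length (by rw [List.length_take]; omega)
  omega

private lemma countP_ge_of_getD (L : List ℝ) (hL : L.Pairwise (· ≥ ·)) (n : ℕ)
    (hn : n < L.length) (t : ℝ) (h : t < L.getD n 0) :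
    n + 1 ≤ L.countP (fun x => decide (t < x)) := by
  rw [List.getD_eq_getElem L 0 hn] at h
  have htake : (L.take (n + 1)).countP (fun x => decide (t < x)) = n + 1 := by
    have hlen : (L.take (n + 1)).length = n + 1 := by
      rw [List.length_take]; omega
    have hall : ∀ x ∈ L.take (n + 1), (fun x => decide (t < x)) x = true := ?_
    · rw [List.countP_eq_length.mpr hall, hlen]
    intro x hx
    simp only [decide_eq_true_eq]
    obtain ⟨i, hi, rfl⟩ := List.mem_iff_getElem.mp hx
    rw [List.getElem_take]
    have hi' : i < n + 1 := by rw [hlen] at hi; exact hi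
    have hiL : i < L.length := by omega
    have : L[i] ≥ L[n] := by
      rcases Nat.lt_or_ge i n with h0 | h0
      · exact hL.rel_get_of_lt (a := ⟨i, hiL⟩) (b := ⟨n, hn⟩) (by simpa)
      · have : i = n := by omega
        subst this; simp
    linarith
  have hsplit := (List.take_append_drop (n + 1) L).symm
  have hcount : L.countP (fun x => decide (t < x)) =
      (L.take (n + 1)).countP (fun x => decide (t < x)) +
      (L.drop (n + 1)).countP (fun x => decide (t < x)) := by
    conv_lhs => rw [hsplit]
    rw [List.countP_append]
  omega

/-- Strict part of Proposition 4: if a speculator's bid `b` exceeds the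
`(k+1)`-th largest bid of `B`, and the `k`-th largest bid of `B` strictly
exceeds the `(k+1)`-th largest, then adding `b` strictly increases the
clearing price. -/
theorem speculator_bid_strictly_increases_clearing_price (k : ℕ)
    (B : Multiset ℝ) (hcard : k + 1 ≤ Multiset.card B) (b : ℝ)
    (hb : kthLargest B (k + 1) < b)
    (hgap : kthLargest B (k + 1) < kthLargest B k) :
    kthLargest B (k + 1) < kthLargest (B + {b}) (k + 1) := by
  rcases Nat.eq_zero_or_pos k with rfl | hk
  · simp [kthLargest] at hgap
  set t := kthLargest B (k + 1) with ht
  set L := B.sort (· ≥ ·) with hLdef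
  have hLsort : L.Pairwise (· ≥ ·) := B.pairwise_sort _
  have hLlen : L.length = Multiset.card B := B.length_sort _
  -- count of elements of B greater than t is at least k
  have hBcount : k ≤ L.countP (fun x => decide (t < x)) := by
    obtain ⟨n, rfl⟩ : ∃ n, k = n + 1 := ⟨k - 1, by omega⟩
    have hgap' : t < L.getD n 0 := by
      have : kthLargest B (n + 1) = L.getD n 0 := by
        simp [kthLargest, hLdef]
      rw [← this]; exact hgap
    exact countP_ge_of_getD L hLsort n (by omega) t hgap'
  -- count for B + {b}
  set L' := (B + {b}).sort (· ≥ ·) with hL'def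
  have hL'sort : L'.Pairwise (· ≥ ·) := (B + {b}).pairwise_sort _
  have hL'len : L'.length = Multiset.card B + 1 := by
    rw [hL'def, Multiset.length_sort]; simp
  have hperm : List.Perm L' (L ++ [b]) := by
    rw [← Multiset.coe_eq_coe]
    rw [hL'def, hLdef, Multiset.sort_eq, ← Multiset.coe_singleton b,
      ← Multiset.coe_add, Multiset.sort_eq]
  have hcount' : k + 1 ≤ L'.countP (fun x => decide (t < x)) := by
    rw [hperm.countP_eq, List.countP_append]
    simp [hb]
    omega
  have hfin : t < L'.getD k 0 :=
    sorted_getD_lt_of_countP L' hL'sort k (by omega) t hcount'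
  have : kthLargest (B + {b}) (k + 1) = L'.getD k 0 := by
    simp [kthLargest, hL'def]
  rw [this]; exact hfin
end
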